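/- Define ψ₁(z) = e^{−z} (I₀(z) − 2z (I₀(z) − I₁(z))) for z ≥ 0. Then ψ₁ is integrable on [0, ∞) and ∫₀^∞ ψ₁(z) dz = 0. -/

import Mathlib

open Real Filter MeasureTheory

/-- The modified Bessel function of integer order `n`:
`Iₙ(μ) = (1/(2π)) ∫₀^{2π} e^{μ cos θ} cos (n θ) dθ`. -/
noncomputable def besselI (n : ℤ) (μ : ℝ) : ℝ :=
  (1 / (2 * Real.pi)) * ∫ θ in (0:ℝ)..(2 * Real.pi),
    Real.exp (μ * Real.cos θ) * Real.cos ((n : ℝ) * θ)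

/-- `ψ₁(z) = e^{−z} (I₀(z) − 2z (I₀(z) − I₁(z)))`. -/
noncomputable def psi1 (z : ℝ) : ℝ :=
  Real.exp (-z) * (besselI 0 z - 2 * z * (besselI 0 z - besselI 1 z))

open Set Topology in
private lemma aux_tendsto (a c₀ c₁ : ℝ) (ha : 0 < a) :
    Tendsto (fun z : ℝ => (c₀ + c₁ * z) * Real.exp (-(z * a))) atTop (𝓝 0) := by
  have h1 : Tendsto (fun z : ℝ => Real.exp (-(z * a))) atTop (𝓝 0) := by
    have := tendsto_rpow_mul_exp_neg_mul_atTop_nhds_zero 0 a ha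
    refine this.congr fun z => ?_
    rw [Real.rpow_zero, one_mul]; ring_nf
  have h2 : Tendsto (fun z : ℝ => z * Real.exp (-(z * a))) atTop (𝓝 0) := by
    have := tendsto_rpow_mul_exp_neg_mul_atTop_nhds_zero 1 a ha
    refine (this.congr' ?_)
    filter_upwards [eventually_ge_atTop (0:ℝ)] with z hz
    rw [Real.rpow_one]; ring_nf
  have := (h1.const_mul c₀).add (h2.const_mul c₁)
  simpa using this.congr fun z => by ring

open Set Topology in
private lemma aux_integrable (a c₀ c₁ : ℝ) (ha : 0 < a) :
    IntegrableOn (fun z : ℝ => (c₀ + c₁ * z) * Real.exp (-(z * a))) (Ioi (0:ℝ)) := by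
  refine integrable_of_isBigO_exp_neg (b := a/2) (by linarith)
    (Continuous.continuousOn (by continuity)) ?_
  refine Asymptotics.IsLittleO.isBigO ?_
  refine Asymptotics.isLittleO_of_tendsto (fun x hx => absurd hx (Real.exp_ne_zero _)) ?_
  have := aux_tendsto (a/2) c₀ c₁ (by linarith)
  refine this.congr fun z => ?_
  rw [mul_div_assoc, ← Real.exp_sub]
  congr 2
  ring

open Set Topology in
private lemma aux_slice (a : ℝ) (ha : 0 ≤ a) :
    IntegrableOn (fun z : ℝ => a * (1 - z * a) * Real.exp (-(z * a))) (Ici (0:ℝ)) := by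
  rcases ha.eq_or_lt with h | h
  · simp [← h]
  · rw [integrableOn_Ici_iff_integrableOn_Ioi]
    exact (aux_integrable a a (-(a^2)) h).congr (ae_of_all _ fun z => by ring)

private lemma aux_hasDeriv (a : ℝ) (x : ℝ) :
    HasDerivAt (fun z : ℝ => a * z * Real.exp (-(z * a)))
      (a * (1 - x * a) * Real.exp (-(x * a))) x := by
  have h1 : HasDerivAt (fun z : ℝ => a * z) a x := by
    simpa using (hasDerivAt_id x).const_mul a
  have h3 : HasDerivAt (fun z : ℝ => -(z * a)) (-a) x := by
    simpa using ((hasDerivAt_id x).mul_const a).fun_neg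
  have h2 := h3.exp
  have := h1.fun_mul h2
  refine this.congr_deriv ?_
  ring

open Set Topology in
private lemma aux_int_zero (a : ℝ) (ha : 0 ≤ a) :
    ∫ z in Ioi (0:ℝ), a * (1 - z * a) * Real.exp (-(z * a)) = 0 := by
  rcases ha.eq_or_lt with h | h
  · simp [← h]
  · have hint : IntegrableOn (fun z : ℝ => a * (1 - z * a) * Real.exp (-(z * a))) (Ioi (0:ℝ)) :=
      (aux_integrable a a (-(a^2)) h).congr (ae_of_all _ fun z => by ring)
    have hT : Tendsto (fun z : ℝ => a * z * Real.exp (-(z * a))) atTop (𝓝 0) := by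
      have := (aux_tendsto a 0 a h).congr (fun z : ℝ => by ring :
        ∀ z : ℝ, (0 + a * z) * Real.exp (-(z * a)) = a * z * Real.exp (-(z * a)))
      exact this
    have := integral_Ioi_of_hasDerivAt_of_tendsto' (fun x _ => aux_hasDeriv a x) hint hT
    simpa using this

open Set Topology in
private lemma aux_norm (a : ℝ) (ha : 0 ≤ a) :
    ∫ z in Ioi (0:ℝ), ‖a * (1 - z * a) * Real.exp (-(z * a))‖ ≤ 2 := by
  rcases ha.eq_or_lt with h | h
  · simp [← h]
  · have hD : IntegrableOn (fun z : ℝ => (a + a^2 * z) * Real.exp (-(z * a))) (Ioi (0:ℝ)) :=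
      aux_integrable a a (a^2) h
    have hf : IntegrableOn (fun z : ℝ => ‖a * (1 - z * a) * Real.exp (-(z * a))‖) (Ioi (0:ℝ)) :=
      ((aux_slice a ha).mono_set Ioi_subset_Ici_self).norm
    have hmono : ∫ z in Ioi (0:ℝ), ‖a * (1 - z * a) * Real.exp (-(z * a))‖
        ≤ ∫ z in Ioi (0:ℝ), (a + a^2 * z) * Real.exp (-(z * a)) := by
      refine setIntegral_mono_on hf hD measurableSet_Ioi fun z hz => ?_
      have hz0 : 0 < z := hz
      have hE : 0 < Real.exp (-(z * a)) := Real.exp_pos _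
      rw [Real.norm_eq_abs, abs_mul, abs_of_pos hE, abs_mul, abs_of_pos h]
      have habs : |1 - z * a| ≤ 1 + z * a := by
        rw [abs_le]; constructor <;> nlinarith
      have : a * |1 - z * a| ≤ a + a^2 * z := by nlinarith
      nlinarith
    have hDval : ∫ z in Ioi (0:ℝ), (a + a^2 * z) * Real.exp (-(z * a)) = 2 := by
      have hder : ∀ x : ℝ, HasDerivAt (fun z : ℝ => -(2 + a * z) * Real.exp (-(z * a)))
          ((a + a^2 * x) * Real.exp (-(x * a))) x := by
        intro x
        have h1 : HasDerivAt (fun z : ℝ => -(2 + a * z)) (-a) x := by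
          simpa using (((hasDerivAt_id x).const_mul a).const_add 2).fun_neg
        have h3 : HasDerivAt (fun z : ℝ => -(z * a)) (-a) x := by
          simpa using ((hasDerivAt_id x).mul_const a).fun_neg
        have := h1.fun_mul h3.exp
        refine this.congr_deriv ?_
        ring
      have hT : Tendsto (fun z : ℝ => -(2 + a * z) * Real.exp (-(z * a))) atTop (𝓝 0) :=
        (aux_tendsto a (-2) (-a) h).congr fun z => by ring
      have := integral_Ioi_of_hasDerivAt_of_tendsto' (fun x _ => hder x) hD hT
      rw [this]
      norm_num
    linarith

private lemma psi1_rep (z : ℝ) :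
    psi1 z = (1 / (2 * Real.pi)) * ∫ θ in (0:ℝ)..(2 * Real.pi),
      (1 - Real.cos θ) * (1 - z * (1 - Real.cos θ)) * Real.exp (-(z * (1 - Real.cos θ))) := by
  have hA : besselI 0 z = (1 / (2 * Real.pi)) * ∫ θ in (0:ℝ)..(2 * Real.pi),
      Real.exp (z * Real.cos θ) := by
    simp [besselI]
  have hB : besselI 1 z = (1 / (2 * Real.pi)) * ∫ θ in (0:ℝ)..(2 * Real.pi),
      Real.exp (z * Real.cos θ) * Real.cos θ := by
    simp [besselI]
  have c1 : Continuous fun θ : ℝ => Real.exp (-z) * (1 - 2 * z) * Real.exp (z * Real.cos θ) := by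
    continuity
  have c2 : Continuous fun θ : ℝ =>
      Real.exp (-z) * (2 * z) * (Real.exp (z * Real.cos θ) * Real.cos θ) := by
    continuity
  have c3 : Continuous fun θ : ℝ =>
      (1 - Real.cos θ) * (1 - z * (1 - Real.cos θ)) * Real.exp (-(z * (1 - Real.cos θ))) := by
    continuity
  have c4 : Continuous fun θ : ℝ =>
      (Real.cos θ - z * Real.sin θ ^ 2) * Real.exp (-(z * (1 - Real.cos θ))) := by
    continuity
  have hder : ∀ θ : ℝ, HasDerivAt (fun t => Real.sin t * Real.exp (-(z * (1 - Real.cos t))))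
      ((Real.cos θ - z * Real.sin θ ^ 2) * Real.exp (-(z * (1 - Real.cos θ)))) θ := by
    intro θ
    have h1 : HasDerivAt (fun t : ℝ => -(z * (1 - Real.cos t))) (-(z * Real.sin θ)) θ := by
      have := (((Real.hasDerivAt_cos θ).const_sub 1).const_mul z).fun_neg
      refine this.congr_deriv ?_
      ring
    have := (Real.hasDerivAt_sin θ).fun_mul h1.exp
    refine this.congr_deriv ?_
    ring
  have key : ∫ θ in (0:ℝ)..(2 * Real.pi),
      (Real.cos θ - z * Real.sin θ ^ 2) * Real.exp (-(z * (1 - Real.cos θ))) = 0 := by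
    rw [intervalIntegral.integral_eq_sub_of_hasDerivAt (fun θ _ => hder θ)
      (c4.intervalIntegrable _ _)]
    simp [Real.sin_two_pi]
  have hsplit : ∀ θ : ℝ, Real.exp (-z) * (1 - 2 * z) * Real.exp (z * Real.cos θ)
      + Real.exp (-z) * (2 * z) * (Real.exp (z * Real.cos θ) * Real.cos θ)
      = (1 - Real.cos θ) * (1 - z * (1 - Real.cos θ)) * Real.exp (-(z * (1 - Real.cos θ)))
        + (Real.cos θ - z * Real.sin θ ^ 2) * Real.exp (-(z * (1 - Real.cos θ))) := by
    intro θ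
    have hE : Real.exp (-z) * Real.exp (z * Real.cos θ)
        = Real.exp (-(z * (1 - Real.cos θ))) := by
      rw [← Real.exp_add]; ring_nf
    have hs : Real.sin θ ^ 2 = 1 - Real.cos θ ^ 2 := Real.sin_sq θ
    linear_combination (1 - 2 * z + 2 * z * Real.cos θ) * hE
      + z * Real.exp (-(z * (1 - Real.cos θ))) * hs
  have hcomb : ∫ θ in (0:ℝ)..(2 * Real.pi),
      (Real.exp (-z) * (1 - 2 * z) * Real.exp (z * Real.cos θ)
        + Real.exp (-z) * (2 * z) * (Real.exp (z * Real.cos θ) * Real.cos θ))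
      = ∫ θ in (0:ℝ)..(2 * Real.pi),
        (1 - Real.cos θ) * (1 - z * (1 - Real.cos θ)) * Real.exp (-(z * (1 - Real.cos θ))) := by
    rw [intervalIntegral.integral_congr (g := fun θ =>
      (1 - Real.cos θ) * (1 - z * (1 - Real.cos θ)) * Real.exp (-(z * (1 - Real.cos θ)))
        + (Real.cos θ - z * Real.sin θ ^ 2) * Real.exp (-(z * (1 - Real.cos θ))))
      (fun θ _ => hsplit θ)]
    rw [intervalIntegral.integral_add (c3.intervalIntegrable _ _) (c4.intervalIntegrable _ _),
      key, add_zero]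
  have hAB : Real.exp (-z) * (1 - 2 * z) *
        (∫ θ in (0:ℝ)..(2 * Real.pi), Real.exp (z * Real.cos θ))
      + Real.exp (-z) * (2 * z) *
        (∫ θ in (0:ℝ)..(2 * Real.pi), Real.exp (z * Real.cos θ) * Real.cos θ)
      = ∫ θ in (0:ℝ)..(2 * Real.pi),
        (1 - Real.cos θ) * (1 - z * (1 - Real.cos θ)) * Real.exp (-(z * (1 - Real.cos θ))) := by
    rw [← intervalIntegral.integral_const_mul, ← intervalIntegral.integral_const_mul,
      ← intervalIntegral.integral_add (c1.intervalIntegrable _ _) (c2.intervalIntegrable _ _)]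
    exact hcomb
  unfold psi1
  rw [hA, hB]
  linear_combination (1 / (2 * Real.pi)) * hAB

private noncomputable def G : ℝ × ℝ → ℝ := fun p =>
  (1 - Real.cos p.1) * (1 - p.2 * (1 - Real.cos p.1)) * Real.exp (-(p.2 * (1 - Real.cos p.1)))

private lemma G_cont : Continuous G := by
  unfold G; fun_prop

private lemma ha_nonneg (θ : ℝ) : 0 ≤ 1 - Real.cos θ := by
  have := Real.cos_le_one θ; linarith

private lemma G_slice (θ : ℝ) : IntegrableOn (fun z => G (θ, z)) (Set.Ici (0:ℝ)) volume := by
  have := aux_slice (1 - Real.cos θ) (ha_nonneg θ)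
  simpa [G] using this

private lemma G_norm (θ : ℝ) : ∫ z in Set.Ioi (0:ℝ), ‖G (θ, z)‖ ≤ 2 := by
  have := aux_norm (1 - Real.cos θ) (ha_nonneg θ)
  simpa [G] using this

private lemma G_zero (θ : ℝ) : ∫ z in Set.Ioi (0:ℝ), G (θ, z) = 0 := by
  have := aux_int_zero (1 - Real.cos θ) (ha_nonneg θ)
  simpa [G] using this

private lemma G_rep (z : ℝ) :
    psi1 z = (1 / (2 * Real.pi)) * ∫ θ in Set.Ioc (0:ℝ) (2 * Real.pi), G (θ, z) := by
  rw [psi1_rep z, intervalIntegral.integral_of_le (by positivity : (0:ℝ) ≤ 2 * Real.pi)]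
  rfl

/-- `ψ₁` is integrable on `[0, ∞)` and its integral there vanishes. -/
theorem psi1_integrable_and_integral_zero :
    IntegrableOn psi1 (Set.Ici (0:ℝ)) volume ∧
    ∫ z in Set.Ici (0:ℝ), psi1 z = 0 := by
  have hGint : Integrable G ((volume.restrict (Set.Ioc (0:ℝ) (2 * Real.pi))).prod
      (volume.restrict (Set.Ici (0:ℝ)))) := by
    rw [MeasureTheory.integrable_prod_iff G_cont.aestronglyMeasurable]
    constructor
    · exact Filter.Eventually.of_forall fun θ => G_slice θ
    · refine Integrable.mono' (integrable_const 2)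
        (G_cont.aestronglyMeasurable.norm.integral_prod_right') ?_
      refine Filter.Eventually.of_forall fun θ => ?_
      rw [Real.norm_eq_abs, abs_of_nonneg (integral_nonneg fun z => norm_nonneg _)]
      calc (∫ z in Set.Ici (0:ℝ), ‖G (θ, z)‖)
          = ∫ z in Set.Ioi (0:ℝ), ‖G (θ, z)‖ := integral_Ici_eq_integral_Ioi
        _ ≤ 2 := G_norm θ
  have hzero : ∀ θ : ℝ, (∫ z in Set.Ici (0:ℝ), G (θ, z)) = 0 := fun θ => by
    rw [show (∫ z in Set.Ici (0:ℝ), G (θ, z)) = ∫ z in Set.Ioi (0:ℝ), G (θ, z) from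
      integral_Ici_eq_integral_Ioi]
    exact G_zero θ
  constructor
  · have h1 := (hGint.integral_prod_right).const_mul (1 / (2 * Real.pi))
    exact h1.congr (Filter.Eventually.of_forall fun z => (G_rep z).symm)
  · have hswap := MeasureTheory.integral_integral_swap (f := fun θ z => G (θ, z)) hGint
    calc ∫ z in Set.Ici (0:ℝ), psi1 z
        = ∫ z in Set.Ici (0:ℝ),
            (1 / (2 * Real.pi)) * ∫ θ in Set.Ioc (0:ℝ) (2 * Real.pi), G (θ, z) :=
          integral_congr_ae (Filter.Eventually.of_forall fun z => G_rep z)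
      _ = (1 / (2 * Real.pi)) * ∫ z in Set.Ici (0:ℝ),
            (∫ θ in Set.Ioc (0:ℝ) (2 * Real.pi), G (θ, z)) := integral_const_mul _ _
      _ = (1 / (2 * Real.pi)) * ∫ θ in Set.Ioc (0:ℝ) (2 * Real.pi),
            (∫ z in Set.Ici (0:ℝ), G (θ, z)) := by rw [← hswap]
      _ = 0 := by simp [hzero]
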